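/- Let f, g ∈ F be given by admissible linear systems 𝒜_f = (u_f, A_f, v_f) and 𝒜_g = (u_g, A_g, v_g) of dimensions n_f and n_g, with left families s_f = A_f⁻¹ v_f and s_g = A_g⁻¹ v_g. Then the block matrix A = [[A_f, −A_f u_fᵀ u_g], [0, A_g]] ∈ F^{(n_f+n_g)×(n_f+n_g)} (where u_fᵀ u_g is the n_f × n_g matrix with a single 1 in position (1,1)) is invertible over F, the solution vector of the system A s = [v_f; v_g] is s = [s_f + u_fᵀ g; s_g], and consequently (e₁, A, [v_f; v_g]) is an admissible linear system for f + g. -/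

import Mathlib

open Matrix

/-- The row vector `e₁ = (1,0,…,0)`. -/
def e1Row (F : Type*) [Semiring F] (n : ℕ) [NeZero n] : Matrix (Fin 1) (Fin n) F :=
  Matrix.of fun _ j => if j = 0 then 1 else 0

lemma e1Row_mul_apply {F : Type*} [Semiring F] {n : ℕ} [NeZero n] {m : Type*}
    (M : Matrix (Fin n) m F) (j : m) : (e1Row F n * M) 0 j = M 0 j := by
  simp [e1Row, mul_apply, ite_mul]

/-- The admissible linear system for the sum `f + g`: the block matrix
`A = [[A_f, −A_f e₁ᵀ e₁], [0, A_g]]` is invertible over `F`, the solution of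
`A s = [v_f; v_g]` is `s = [s_f + e₁ᵀ g; s_g]`, and `(e₁, A, [v_f; v_g])` is an
admissible linear system for `f + g`. -/
theorem als_sum {K F : Type*} [Field K] [DivisionRing F] [Algebra K F]
    {nf ng : ℕ} [NeZero nf] [NeZero ng]
    (f g : F)
    (Af Bf : Matrix (Fin nf) (Fin nf) F) (vf : Matrix (Fin nf) (Fin 1) K)
    (Ag Bg : Matrix (Fin ng) (Fin ng) F) (vg : Matrix (Fin ng) (Fin 1) K)
    (hAf : Af * Bf = 1) (hAf' : Bf * Af = 1)
    (hAg : Ag * Bg = 1) (hAg' : Bg * Ag = 1)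
    (hf : f = (e1Row F nf * Bf * vf.map (algebraMap K F)) 0 0)
    (hg : g = (e1Row F ng * Bg * vg.map (algebraMap K F)) 0 0) :
    let A : Matrix (Fin nf ⊕ Fin ng) (Fin nf ⊕ Fin ng) F :=
      fromBlocks Af (-(Af * Matrix.single (0 : Fin nf) (0 : Fin ng) (1 : F))) 0 Ag
    let v : Matrix (Fin nf ⊕ Fin ng) (Fin 1) F :=
      fromRows (vf.map (algebraMap K F)) (vg.map (algebraMap K F))
    let s : Matrix (Fin nf ⊕ Fin ng) (Fin 1) F :=
      fromRows (Bf * vf.map (algebraMap K F) + Matrix.single (0 : Fin nf) (0 : Fin 1) g)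
        (Bg * vg.map (algebraMap K F))
    (A * s = v) ∧ ∃ B, A * B = 1 ∧ B * A = 1 ∧ (B * v) (Sum.inl 0) 0 = f + g := by
  intro A v s
  set E : Matrix (Fin nf) (Fin ng) F := Matrix.single (0 : Fin nf) (0 : Fin ng) (1 : F)
    with hEdef
  set vf' := vf.map (algebraMap K F)
  set vg' := vg.map (algebraMap K F)
  set S : Matrix (Fin nf) (Fin 1) F := Matrix.single (0 : Fin nf) (0 : Fin 1) g
    with hSdef
  have hf' : f = (Bf * vf') 0 0 := by rw [hf, Matrix.mul_assoc, e1Row_mul_apply]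
  have hg' : g = (Bg * vg') 0 0 := by rw [hg, Matrix.mul_assoc, e1Row_mul_apply]
  have hE : E * (Bg * vg') = S := by
    ext i j
    have hj : j = 0 := Subsingleton.elim _ _
    subst hj
    simp only [hEdef, hSdef, mul_apply, Matrix.single, Matrix.of_apply, ite_mul, one_mul,
      zero_mul]
    rcases eq_or_ne i 0 with hi | hi
    · subst hi
      simp [hg', Finset.sum_ite_eq, mul_apply]
    · simp [Ne.symm hi]
  constructor
  · show fromBlocks Af (-(Af * E)) 0 Ag * fromRows (Bf * vf' + S) (Bg * vg') = v
    rw [fromBlocks_mul_fromRows]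
    have h1 : Af * (Bf * vf' + S) + -(Af * E) * (Bg * vg') = vf' := by
      rw [← hE, Matrix.mul_add, Matrix.neg_mul, Matrix.mul_assoc Af E, add_assoc,
        add_neg_cancel, add_zero, ← Matrix.mul_assoc, hAf, Matrix.one_mul]
    have h2 : (0 : Matrix (Fin ng) (Fin nf) F) * (Bf * vf' + S) + Ag * (Bg * vg') = vg' := by
      rw [Matrix.zero_mul, ← Matrix.mul_assoc, hAg, Matrix.one_mul, zero_add]
    rw [h1, h2]
  · refine ⟨fromBlocks Bf (E * Bg) 0 Bg, ?_, ?_, ?_⟩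
    · rw [fromBlocks_multiply]
      have h12 : Af * (E * Bg) + -(Af * E) * Bg = 0 := by
        rw [Matrix.neg_mul, Matrix.mul_assoc, add_neg_cancel]
      rw [← hEdef]
      simp only [Matrix.mul_zero, Matrix.zero_mul, add_zero, zero_add, hAf, hAg, h12]
      rw [← fromBlocks_one]
    · rw [fromBlocks_multiply]
      have h21 : Bf * -(Af * E) + (E * Bg) * Ag = 0 := by
        rw [Matrix.mul_neg, ← Matrix.mul_assoc, hAf', Matrix.one_mul,
          Matrix.mul_assoc E, hAg', Matrix.mul_one, neg_add_cancel]
      rw [← hEdef]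
      simp only [Matrix.mul_zero, Matrix.zero_mul, add_zero, zero_add, hAf', hAg', h21]
      rw [← fromBlocks_one]
    · show (fromBlocks Bf (E * Bg) 0 Bg * fromRows vf' vg') (Sum.inl 0) 0 = f + g
      rw [fromBlocks_mul_fromRows]
      have hEBg : (E * Bg) * vg' = S := by rw [Matrix.mul_assoc, hE]
      rw [hEBg]
      simp [hf', hSdef, Matrix.single]
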